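/- Let p be an odd prime. Then the number of g ∈ GL₂(ℤ/pℤ) such that det(1 − g) ≠ 0 equals p(p³ − 2p² − p + 3). -/

import Mathlib

open Finset Matrix

lemma count_c {F : Type*} [Field F] [Fintype F] [DecidableEq F] (b u v : F) :
    (univ.filter fun c : F => b*c ≠ u ∧ b*c ≠ v).card =
    if b = 0 then (if u = 0 ∨ v = 0 then 0 else Fintype.card F)
    else if u = v then Fintype.card F - 1 else Fintype.card F - 2 := by
  split_ifs with hb hu1 huv
  · subst hb
    simp only [zero_mul]
    rcases hu1 with h | h
    · subst h; simp
    · subst h; simp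
  · subst hb
    push_neg at hu1
    rw [Finset.filter_true_of_mem, Finset.card_univ]
    intro c _
    simp only [zero_mul]
    exact ⟨Ne.symm hu1.1, Ne.symm hu1.2⟩
  all_goals
    have key : ∀ w : F, ∀ c : F, (b*c = w ↔ c = b⁻¹ * w) := fun w c => by
      rw [eq_comm, eq_inv_mul_iff_mul_eq₀ hb, eq_comm, mul_comm]
  all_goals
    simp only [ne_eq, key]
  all_goals
    rw [show (univ.filter fun c : F => ¬c = b⁻¹*u ∧ ¬c = b⁻¹*v) = univ \ {b⁻¹*u, b⁻¹*v} by
          ext c; simp [not_or]]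
  all_goals rw [Finset.card_sdiff_of_subset (by simp), Finset.card_univ]
  · subst huv; simp
  · rw [Finset.card_insert_of_notMem
      (by simpa using fun h => huv (mul_left_cancel₀ (inv_ne_zero hb) h)),
      Finset.card_singleton]

lemma sum_ite_const_eq {F : Type*} [Fintype F] [DecidableEq F] (c0 : F) (X Y : ℕ) :
    ∑ d : F, (if d = c0 then X else Y) = X + (Fintype.card F - 1) * Y := by
  rw [Finset.sum_ite, Finset.sum_const, Finset.sum_const, Finset.filter_eq',
    if_pos (mem_univ c0), Finset.filter_ne', Finset.card_erase_of_mem (mem_univ c0),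
    Finset.card_univ]
  simp [mul_comm]

lemma sum_ite_two {F : Type*} [Fintype F] [DecidableEq F] (c0 c1 : F) (h : c0 ≠ c1) (Y : ℕ) :
    ∑ d : F, (if d = c0 ∨ d = c1 then 0 else Y) = (Fintype.card F - 2) * Y := by
  rw [Finset.sum_ite, Finset.sum_const, Finset.sum_const, smul_zero, zero_add,
    show (univ.filter fun d : F => ¬(d = c0 ∨ d = c1)) = univ \ {c0, c1} by
      ext c; simp [not_or],
    Finset.card_sdiff_of_subset (by simp), Finset.card_univ,
    Finset.card_insert_of_notMem (by simpa using h), Finset.card_singleton]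
  simp [mul_comm]

lemma tuple_count (F : Type*) [Field F] [Fintype F] [DecidableEq F] :
    (univ.filter fun x : F × F × F × F =>
        x.1 * x.2.1 - x.2.2.1 * x.2.2.2 ≠ 0 ∧
        (1 - x.1) * (1 - x.2.1) - x.2.2.1 * x.2.2.2 ≠ 0).card =
    (Fintype.card F - 2) * (Fintype.card F * (Fintype.card F - 2)) +
      Fintype.card F * ((Fintype.card F - 1) *
        ((Fintype.card F - 1) + (Fintype.card F - 1) * (Fintype.card F - 2))) := by
  set q := Fintype.card F with hq
  rw [Finset.card_filter]
  rw [Fintype.sum_prod_type]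
  have step1 : ∀ a : F, (∑ x : F × F × F, if (a * x.1 - x.2.1 * x.2.2 ≠ 0 ∧
      (1 - a) * (1 - x.1) - x.2.1 * x.2.2 ≠ 0) then 1 else 0)
      = (if a = 0 ∨ a = 1 then 0 else q * (q-2)) + (q-1) * ((q-1) + (q-1)*(q-2)) := by
    intro a
    rw [Fintype.sum_prod_type]
    have step2 : ∀ d : F, (∑ x : F × F, if (a * d - x.1 * x.2 ≠ 0 ∧
        (1 - a) * (1 - d) - x.1 * x.2 ≠ 0) then 1 else 0)
        = (if a * d = 0 ∨ (1-a)*(1-d) = 0 then 0 else q) +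
          (q-1) * (if a*d = (1-a)*(1-d) then q-1 else q-2) := by
      intro d
      rw [Fintype.sum_prod_type]
      have step3 : ∀ b : F, (∑ c : F, if (a * d - b * c ≠ 0 ∧
          (1 - a) * (1 - d) - b * c ≠ 0) then 1 else 0)
          = if b = 0 then (if a*d = 0 ∨ (1-a)*(1-d) = 0 then 0 else q)
            else if a*d = (1-a)*(1-d) then q - 1 else q - 2 := by
        intro b
        rw [← Finset.card_filter]
        have : (univ.filter fun c : F => a * d - b * c ≠ 0 ∧
            (1 - a) * (1 - d) - b * c ≠ 0)
            = univ.filter fun c : F => b * c ≠ a * d ∧ b * c ≠ (1-a)*(1-d) := by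
          ext c
          simp only [mem_filter, sub_ne_zero, ne_eq]
          rw [eq_comm (a := a*d), eq_comm (a := (1-a)*(1-d))]
        rw [this, count_c]
      simp_rw [step3]
      rw [Finset.sum_ite, Finset.sum_const, Finset.sum_const, Finset.filter_eq',
        if_pos (mem_univ (0:F)), Finset.filter_ne', Finset.card_erase_of_mem (mem_univ (0:F)),
        Finset.card_univ, Finset.card_singleton]
      simp [mul_comm, ← hq]
    simp_rw [step2]
    rw [Finset.sum_add_distrib]
    congr 1
    · -- first part
      by_cases ha : a = 0 ∨ a = 1
      · rw [if_pos ha]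
        rcases ha with h | h <;> subst h <;> simp
      · rw [if_neg ha]
        push_neg at ha
        have hcond : ∀ d : F, (a * d = 0 ∨ (1-a)*(1-d) = 0) ↔ (d = 0 ∨ d = 1) := by
          intro d
          have h1 : (1:F) - a ≠ 0 := sub_ne_zero.2 (Ne.symm ha.2)
          constructor
          · rintro (h | h)
            · left; rcases mul_eq_zero.1 h with h' | h'
              · exact absurd h' ha.1
              · exact h'
            · right; rcases mul_eq_zero.1 h with h' | h'
              · exact absurd h' h1
              · linear_combination -h'
          · rintro (h | h)
            · left; rw [h, mul_zero]
            · right; rw [h]; ring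
        simp_rw [hcond]
        rw [sum_ite_two (0:F) 1 (by norm_num) q, ← hq, mul_comm]
    · -- second part
      have hcond : ∀ d : F, (a*d = (1-a)*(1-d)) ↔ (d = 1 - a) := by
        intro d
        constructor <;> intro h <;> linear_combination h
      simp_rw [hcond]
      rw [← Finset.mul_sum, sum_ite_const_eq (1-a) (q-1) (q-2), ← hq]
  simp_rw [step1]
  rw [Finset.sum_add_distrib, Finset.sum_const, sum_ite_two (0:F) 1 (by norm_num) (q*(q-2)),
    ← hq, Finset.card_univ, ← hq, smul_eq_mul]

/-- For an odd prime `p`, the number of `g ∈ GL₂(ℤ/pℤ)` with `det(1 - g) ≠ 0`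
equals `p(p³ - 2p² - p + 3)`. -/
theorem card_GL2_one_sub_invertible (p : ℕ) [Fact p.Prime] (hp : p ≠ 2) :
    (Nat.card {g : GL (Fin 2) (ZMod p) |
        Matrix.det (1 - (g : Matrix (Fin 2) (Fin 2) (ZMod p))) ≠ 0} : ℤ)
      = p * ((p : ℤ) ^ 3 - 2 * (p : ℤ) ^ 2 - p + 3) := by
  have hbij : Nat.card {g : GL (Fin 2) (ZMod p) |
        Matrix.det (1 - (g : Matrix (Fin 2) (Fin 2) (ZMod p))) ≠ 0}
      = (univ.filter fun x : ZMod p × ZMod p × ZMod p × ZMod p =>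
          x.1 * x.2.1 - x.2.2.1 * x.2.2.2 ≠ 0 ∧
          (1 - x.1) * (1 - x.2.1) - x.2.2.1 * x.2.2.2 ≠ 0).card := by
    set F := ZMod p
    rw [← Fintype.card_subtype, ← Nat.card_eq_fintype_card]
    symm
    have det1 : ∀ m : Matrix (Fin 2) (Fin 2) F,
        (1 - m).det = (1 - m 0 0) * (1 - m 1 1) - m 0 1 * m 1 0 := by
      intro m
      simp [Matrix.det_fin_two, Matrix.sub_apply, Matrix.one_apply]
      ring
    apply Nat.card_eq_of_bijective
      (f := fun x => ⟨Matrix.GeneralLinearGroup.mkOfDetNeZero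
        !![x.1.1, x.1.2.2.1; x.1.2.2.2, x.1.2.1]
        (by rw [Matrix.det_fin_two_of]; exact x.2.1), by
          show (1 - (!![x.1.1, x.1.2.2.1; x.1.2.2.2, x.1.2.1] : Matrix (Fin 2) (Fin 2) F)).det ≠ 0
          rw [det1]
          simpa using x.2.2⟩)
    constructor
    · rintro ⟨⟨a, d, b, c⟩, h⟩ ⟨⟨a', d', b', c'⟩, h'⟩ heq
      have hm : (!![a, b; c, d] : Matrix (Fin 2) (Fin 2) F) = !![a', b'; c', d'] := by
        have := congrArg (fun z => ((z : {g : GL (Fin 2) F |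
          Matrix.det (1 - (g : Matrix (Fin 2) (Fin 2) F)) ≠ 0}) : GL (Fin 2) F).val) heq
        exact this
      have h00 := congrFun (congrFun hm 0) 0
      have h01 := congrFun (congrFun hm 0) 1
      have h10 := congrFun (congrFun hm 1) 0
      have h11 := congrFun (congrFun hm 1) 1
      simp at h00 h01 h10 h11
      ext <;> assumption
    · rintro ⟨g, hg⟩
      set m : Matrix (Fin 2) (Fin 2) F := (g : Matrix (Fin 2) (Fin 2) F) with hm
      have hdet : m.det ≠ 0 := by
        have : IsUnit m.det := (Matrix.isUnit_iff_isUnit_det m).1 g.isUnit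
        exact this.ne_zero
      refine ⟨⟨(m 0 0, m 1 1, m 0 1, m 1 0), ⟨?_, ?_⟩⟩, ?_⟩
      · rw [← Matrix.det_fin_two]; exact hdet
      · rw [show (1 - m 0 0) * (1 - m 1 1) - m 0 1 * m 1 0 = (1 - m).det from (det1 m).symm]
        exact hg
      · apply Subtype.ext
        apply Units.ext
        show (!![m 0 0, m 0 1; m 1 0, m 1 1] : Matrix (Fin 2) (Fin 2) F) = m
        exact (Matrix.eta_fin_two m).symm
  rw [hbij, tuple_count (ZMod p), ZMod.card]
  have h2 : 2 ≤ p := (Fact.out : p.Prime).two_le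
  push_cast [Nat.cast_sub (show 1 ≤ p by omega), Nat.cast_sub h2]
  ring
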